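/- For every integer k ≥ 2 and every x ∈ [0,1], k·x^{k-2} - (k-1)·x^{k-1} ≤ 1 + 1/((k-1)(2k-3)). -/

import Mathlib

lemma amgm_pow (m : ℕ) (a b : ℝ) (ha : 0 ≤ a) (hb : 0 ≤ b) :
    a ^ m * b ≤ (((m : ℝ) * a + b) / ((m : ℝ) + 1)) ^ (m + 1) := by
  have hm1 : (0:ℝ) < (m:ℝ) + 1 := by positivity
  set w₁ : ℝ := (m:ℝ) / ((m:ℝ) + 1) with hw₁def
  set w₂ : ℝ := 1 / ((m:ℝ) + 1) with hw₂def
  have hw₁ : 0 ≤ w₁ := by positivity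
  have hw₂ : 0 ≤ w₂ := by positivity
  have hw : w₁ + w₂ = 1 := by rw [hw₁def, hw₂def]; field_simp
  have h := Real.geom_mean_le_arith_mean2_weighted hw₁ hw₂ ha hb hw
  have hLnn : 0 ≤ a ^ w₁ * b ^ w₂ := by positivity
  have h2 := pow_le_pow_left₀ hLnn h (m + 1)
  have hL : (a ^ w₁ * b ^ w₂) ^ (m + 1) = a ^ m * b := by
    rw [mul_pow, ← Real.rpow_natCast (a ^ w₁) (m+1), ← Real.rpow_natCast (b ^ w₂) (m+1),
      ← Real.rpow_mul ha, ← Real.rpow_mul hb]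
    have e1 : w₁ * ((m+1 : ℕ) : ℝ) = (m:ℕ) := by
      rw [hw₁def]; push_cast; field_simp
    have e2 : w₂ * ((m+1 : ℕ) : ℝ) = 1 := by
      rw [hw₂def]; push_cast; field_simp
    rw [e1, e2, Real.rpow_one, Real.rpow_natCast]
  have hR : w₁ * a + w₂ * b = ((m : ℝ) * a + b) / ((m : ℝ) + 1) := by
    rw [hw₁def, hw₂def]; field_simp
  rw [hL, hR] at h2
  exact h2

lemma bern2 (s : ℝ) (hs : 0 ≤ s) : ∀ m : ℕ,
    1 + (m:ℝ) * s + (m:ℝ) * ((m:ℝ) - 1) / 2 * s ^ 2 ≤ (1 + s) ^ m := by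
  intro m
  induction m with
  | zero => norm_num
  | succ n ih =>
      have hnn : (0:ℝ) ≤ (n:ℝ) := by positivity
      have hstep : (1 + (n:ℝ) * s + (n:ℝ) * ((n:ℝ) - 1) / 2 * s ^ 2) * (1 + s)
          ≤ (1 + s) ^ (n+1) := by
        rw [pow_succ]
        apply mul_le_mul_of_nonneg_right ih (by linarith)
      push_cast
      have hcube : 0 ≤ s ^ 3 := by positivity
      have h5 : (0:ℝ) ≤ (n:ℝ) * ((n:ℝ) - 1) := by
        rcases Nat.eq_zero_or_pos n with h | h
        · simp [h]
        · have : (1:ℝ) ≤ (n:ℝ) := by exact_mod_cast h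
          nlinarith
      nlinarith [mul_nonneg h5 hcube]

lemma powid (p : ℕ) (A B : ℝ) (hA : A ≠ 0) (hB : B ≠ 0) :
    (A / B) ^ (p + 1 + 1) * (B ^ 2 / A) ^ (p + 1) = A * B ^ p := by
  rw [div_pow, div_pow, div_mul_div_comm, div_eq_iff (by positivity)]
  rw [← pow_mul]
  ring

lemma key_ineq (c : ℝ) (hc : 1 ≤ c) :
    c + 2 ≤ (1 + 1 / ((c + 1) * (2 * c + 1))) *
      ((c + 1) * (1 + c * (1 / (c * (c + 2))) + c * (c - 1) / 2 * (1 / (c * (c + 2))) ^ 2)) := by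
  have h1 : (0:ℝ) < c := by linarith
  have h2 : (0:ℝ) < c + 2 := by linarith
  have h3 : (0:ℝ) < c + 1 := by linarith
  have h4 : (0:ℝ) < 2 * c + 1 := by linarith
  have ht : (0:ℝ) ≤ c - 1 := by linarith
  rw [← sub_nonneg]
  field_simp
  nlinarith [pow_nonneg ht 2, pow_nonneg ht 3, pow_nonneg ht 4, pow_nonneg ht 5, pow_nonneg ht 6]

theorem g_k_two_le (k : ℕ) (hk : 2 ≤ k) (x : ℝ) (hx : x ∈ Set.Icc (0 : ℝ) 1) :
    (k : ℝ) * x ^ (k - 2) - ((k : ℝ) - 1) * x ^ (k - 1)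
      ≤ 1 + 1 / (((k : ℝ) - 1) * (2 * (k : ℝ) - 3)) := by
  obtain ⟨hx0, hx1⟩ := hx
  rcases eq_or_lt_of_le hk with hk2 | hk3
  · -- k = 2
    subst hk2
    norm_num <;> linarith
  · -- k ≥ 3 : write k = p + 3 and c = p + 1 (so c = k - 2 ≥ 1)
    obtain ⟨p, rfl⟩ : ∃ p, k = p + 3 := ⟨k - 3, by omega⟩
    obtain ⟨c, hcdef, hc⟩ : ∃ c : ℝ, c = (p:ℝ) + 1 ∧ 1 ≤ c := by
      exact ⟨(p:ℝ) + 1, rfl, by have := Nat.cast_nonneg (α := ℝ) p; linarith⟩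
    have hc0 : (0:ℝ) < c := by linarith
    have hc1 : (0:ℝ) < c + 1 := by linarith
    have hc2 : (0:ℝ) < c + 2 := by linarith
    have hek2 : p + 3 - 2 = p + 1 := by omega
    have hek1 : p + 3 - 1 = p + 2 := by omega
    have hcast : ((p + 3 : ℕ) : ℝ) = c + 2 := by rw [hcdef]; push_cast; ring
    rw [hek2, hek1, hcast, show (c + 2 - 1 : ℝ) = c + 1 from by ring,
      show (2 * (c + 2) - 3 : ℝ) = 2 * c + 1 from by ring,
      show (c+2) * x ^ (p+1) - (c+1) * x ^ (p+2)
        = x ^ (p+1) * ((c + 2) - (c + 1) * x) from by ring]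
    have hB0 : 0 ≤ (c + 2) - (c + 1) * x := by nlinarith
    have hs0 : (0:ℝ) ≤ 1 / (c * (c + 2)) := by positivity
    have hQ0 : (0:ℝ) < 1 + c * (1 / (c * (c + 2)))
        + c * (c - 1) / 2 * (1 / (c * (c + 2))) ^ 2 := by
      have t1 : (0:ℝ) ≤ c * (1 / (c * (c + 2))) := by positivity
      have t2 : (0:ℝ) ≤ c * (c - 1) / 2 * (1 / (c * (c + 2))) ^ 2 :=
        mul_nonneg (div_nonneg (mul_nonneg hc0.le (by linarith)) (by norm_num))
          (sq_nonneg _)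
      linarith
    -- AM-GM step
    have hmg := amgm_pow (p+1) ((c+1)*x) (c * ((c + 2) - (c + 1) * x))
      (mul_nonneg hc1.le hx0) (mul_nonneg hc0.le hB0)
    have hcastp : ((p + 1 : ℕ) : ℝ) = c := by rw [hcdef]; push_cast; ring
    rw [hcastp] at hmg
    have hnum : (c * ((c+1)*x) + c * ((c + 2) - (c + 1) * x)) / (c + 1)
        = c * (c + 2) / (c + 1) := by field_simp; ring
    rw [hnum, mul_pow] at hmg
    -- Bernoulli (second order) step
    have hbern := bern2 (1 / (c * (c + 2))) hs0 (p+1)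
    rw [hcastp] at hbern
    have honeps : 1 + 1 / (c * (c + 2)) = (c+1)^2 / (c * (c+2)) := by
      field_simp; ring
    have hpowid := powid p (c * (c + 2)) (c + 1)
      (by positivity : (0:ℝ) < c * (c+2)).ne' hc1.ne'
    have hkey := key_ineq c hc
    -- combine
    have hmultpos : (0:ℝ) < (c+1)^(p+1) * c *
        (1 + c * (1 / (c * (c + 2))) + c * (c - 1) / 2 * (1 / (c * (c + 2))) ^ 2) := by
      have : (0:ℝ) < (c+1)^(p+1) * c := by positivity
      exact mul_pos this hQ0
    refine le_of_mul_le_mul_right ?_ hmultpos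
    calc x ^ (p+1) * ((c + 2) - (c + 1) * x) * ((c+1)^(p+1) * c *
          (1 + c * (1 / (c * (c + 2))) + c * (c - 1) / 2 * (1 / (c * (c + 2))) ^ 2))
        = ((c+1)^(p+1) * x^(p+1) * (c * ((c + 2) - (c + 1) * x))) *
          (1 + c * (1 / (c * (c + 2))) + c * (c - 1) / 2 * (1 / (c * (c + 2))) ^ 2) := by
          ring
      _ ≤ (c * (c + 2) / (c + 1)) ^ (p + 1 + 1) *
          (1 + c * (1 / (c * (c + 2))) + c * (c - 1) / 2 * (1 / (c * (c + 2))) ^ 2) :=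
          mul_le_mul_of_nonneg_right hmg hQ0.le
      _ ≤ (c * (c + 2) / (c + 1)) ^ (p + 1 + 1) * (1 + 1 / (c * (c + 2))) ^ (p+1) :=
          mul_le_mul_of_nonneg_left hbern (by positivity)
      _ = c * (c + 2) * (c + 1) ^ p := by rw [honeps]; exact hpowid
      _ ≤ ((1 + 1 / ((c + 1) * (2 * c + 1))) * ((c + 1) *
          (1 + c * (1 / (c * (c + 2))) + c * (c - 1) / 2 * (1 / (c * (c + 2))) ^ 2))) *
          (c * (c+1)^p) := by
          have h := mul_le_mul_of_nonneg_right hkey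
            (by positivity : (0:ℝ) ≤ c * (c+1)^p)
          calc c * (c + 2) * (c + 1) ^ p = (c + 2) * (c * (c+1)^p) := by ring
            _ ≤ _ := h
      _ = (1 + 1 / ((c + 1) * (2 * c + 1))) * ((c+1)^(p+1) * c *
          (1 + c * (1 / (c * (c + 2))) + c * (c - 1) / 2 * (1 / (c * (c + 2))) ^ 2)) := by
          ring
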